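/- For x < 0 (so that the parameter m = x satisfies m/(m-1) ∈ (0,1)), the complete elliptic integral of the first kind satisfies K(x/(x-1)) = √(1-x) · K(x), where K is taken as a function of the parameter m (i.e. K(m) = ∫_0^{π/2} dθ/√(1 - m sin²θ)). -/

import Mathlib

/-- Complete elliptic integral of the first kind, as a function of the parameter `m = k²`. -/
noncomputable def completeEllipticKm (m : ℝ) : ℝ :=
  ∫ θ in (0 : ℝ)..(Real.pi / 2), 1 / Real.sqrt (1 - m * Real.sin θ ^ 2)

theorem imaginary_modulus_transformation (x : ℝ) (hx : x < 0) :
    completeEllipticKm (x / (x - 1)) = Real.sqrt (1 - x) * completeEllipticKm x := by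
  unfold completeEllipticKm
  have h : ∀ θ : ℝ, 1 / Real.sqrt (1 - x / (x - 1) * Real.sin θ ^ 2)
      = Real.sqrt (1 - x) * (1 / Real.sqrt (1 - x * Real.sin (Real.pi / 2 - θ) ^ 2)) := by
    intro θ
    rw [Real.sin_pi_div_two_sub]
    have hx1 : (0:ℝ) < 1 - x := by linarith
    have key : 1 - x / (x - 1) * Real.sin θ ^ 2 = (1 - x * Real.cos θ ^ 2) / (1 - x) := by
      have hxne : x - 1 ≠ 0 := by linarith
      have hs : Real.sin θ ^ 2 = 1 - Real.cos θ ^ 2 := Real.sin_sq θ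
      field_simp [hs]
      rw [hs]
      ring
    rw [key, Real.sqrt_div (by nlinarith [sq_nonneg (Real.cos θ)] : (0:ℝ) ≤ 1 - x * Real.cos θ ^ 2),
      one_div_div, mul_one_div]
  simp_rw [h]
  rw [intervalIntegral.integral_const_mul]
  congr 1
  rw [intervalIntegral.integral_comp_sub_left
    (fun θ => 1 / Real.sqrt (1 - x * Real.sin θ ^ 2)) (Real.pi / 2)]
  simp
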